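/- Let A be a d-th order CP tensor with factor matrices U_p ∈ ℝ^{n_p×R}, and let k be an integer with 1 ≤ k ≤ ∏_{p=1}^d n_p. Consider the optimization problem: maximize Σ_{j=1}^k Σ_{r=1}^R ∏_{p=1}^d ( Σ_{l=1}^{n_p} U_p(l,r)·X_p(l,j)² ) over families of matrices X_p ∈ ℝ^{n_p×k} (p = 1,…,d) subject to ‖X_p(:,j)‖₂ = 1 for all p and j, and ∏_{p=1}^d ⟨X_p(:,i), X_p(:,j)⟩ = 0 for all i ≠ j. Then this maximum is attained and equals the sum of the k largest entries of A. -/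

import Mathlib

set_option maxHeartbeats 1000000


open Finset

/-- The maximum of the continuous constrained reformulation is
attained and equals the sum of the `k` largest entries of the CP tensor `A`,
where `A (i₁,…,i_d) = ∑ r, ∏ p, U p (i p) r`. -/
theorem stmt_0 (d R k : ℕ) (n : Fin d → ℕ)
    (U : ∀ p : Fin d, Matrix (Fin (n p)) (Fin R) ℝ)
    (hk1 : 1 ≤ k) (hk2 : k ≤ ∏ p, n p) :
    ∃ m : ℝ,
      IsGreatest {s : ℝ | ∃ φ : Fin k → (∀ p : Fin d, Fin (n p)),
          Function.Injective φ ∧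
          s = ∑ j : Fin k, ∑ r : Fin R, ∏ p : Fin d, U p (φ j p) r} m ∧
      IsGreatest {v : ℝ | ∃ X : ∀ p : Fin d, Matrix (Fin (n p)) (Fin k) ℝ,
          (∀ (p : Fin d) (j : Fin k), ∑ l, (X p l j) ^ 2 = 1) ∧
          (∀ i j : Fin k, i ≠ j → ∏ p : Fin d, (∑ l, X p l i * X p l j) = 0) ∧
          v = ∑ j : Fin k, ∑ r : Fin R,
              ∏ p : Fin d, (∑ l, U p l r * (X p l j) ^ 2)} m := by
  classical
  set A : (∀ p : Fin d, Fin (n p)) → ℝ := fun i => ∑ r, ∏ p, U p (i p) r with hA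
  set F : (Fin k → (∀ p : Fin d, Fin (n p))) → ℝ := fun φ => ∑ j, A (φ j) with hF
  have hcard : k ≤ Fintype.card (∀ p : Fin d, Fin (n p)) := by
    simpa [Fintype.card_pi] using hk2
  obtain ⟨e⟩ : Nonempty (Fin k ↪ (∀ p : Fin d, Fin (n p))) :=
    Function.Embedding.nonempty_of_card_le (by simpa using hcard)
  set S : Finset (Fin k → (∀ p : Fin d, Fin (n p))) := univ.filter Function.Injective with hS
  have hSne : (S.image F).Nonempty :=
    ⟨F e, mem_image.2 ⟨e, mem_filter.2 ⟨mem_univ _, e.injective⟩, rfl⟩⟩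
  set m := (S.image F).max' hSne with hm
  obtain ⟨φ₀, hφ₀S, hφ₀⟩ := mem_image.1 ((S.image F).max'_mem hSne)
  have hφ₀inj : Function.Injective φ₀ := (mem_filter.1 hφ₀S).2
  -- key product-sum exchange
  have key : ∀ g : ∀ p : Fin d, Fin (n p) → ℝ,
      ∏ p, ∑ l, g p l = ∑ i : (∀ p : Fin d, Fin (n p)), ∏ p, g p (i p) := by
    intro g
    rw [Finset.prod_univ_sum, Fintype.piFinset_univ]
  refine ⟨m, ⟨⟨φ₀, hφ₀inj, ?_⟩, ?_⟩, ⟨?_, ?_⟩⟩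
  · rw [hm, ← hφ₀, hF]
  · rintro s ⟨φ, hinj, rfl⟩
    have hmem : F φ ∈ S.image F :=
      mem_image.2 ⟨φ, mem_filter.2 ⟨mem_univ _, hinj⟩, rfl⟩
    exact Finset.le_max' _ _ hmem
  · -- membership of m in the continuous formulation set
    refine ⟨fun p => fun l j => if φ₀ j p = l then 1 else 0, ?_, ?_, ?_⟩
    · intro p j
      have h : ∀ l, ((if φ₀ j p = l then (1:ℝ) else 0)) ^ 2
          = if φ₀ j p = l then (1:ℝ) else 0 := by
        intro l; split <;> norm_num
      simp [h]
    · intro i j hij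
      obtain ⟨p, hp⟩ := Function.ne_iff.1 (fun h => hij (hφ₀inj h))
      refine Finset.prod_eq_zero (mem_univ p) ?_
      refine Finset.sum_eq_zero fun l _ => ?_
      by_cases h1 : φ₀ i p = l <;> by_cases h2 : φ₀ j p = l <;>
        simp [h1, h2] <;> exact hp (h1.trans h2.symm)
    · have h : ∀ (j : Fin k) (p : Fin d) (l : Fin (n p)),
          ((if φ₀ j p = l then (1:ℝ) else 0)) ^ 2
          = if φ₀ j p = l then (1:ℝ) else 0 := by
        intro j p l; split <;> norm_num
      rw [hm, ← hφ₀, hF]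
      simp only [hA]
      refine Finset.sum_congr rfl fun j _ => Finset.sum_congr rfl fun r _ =>
        Finset.prod_congr rfl fun p _ => ?_
      simp [h j p, mul_ite]
  · -- upper bound for the continuous formulation
    rintro v ⟨X, hnorm, horth, rfl⟩
    set y : Fin k → (∀ p : Fin d, Fin (n p)) → ℝ := fun j i => ∏ p, X p (i p) j with hy
    set c : (∀ p : Fin d, Fin (n p)) → ℝ := fun i => ∑ j, (y j i) ^ 2 with hc
    -- column sums are 1
    have hcol : ∀ j, ∑ i : (∀ p : Fin d, Fin (n p)), (y j i) ^ 2 = 1 := by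
      intro j
      have h1 : ∑ i : (∀ p : Fin d, Fin (n p)), (y j i) ^ 2
          = ∏ p, ∑ l, (X p l j) ^ 2 := by
        rw [key (fun p l => (X p l j) ^ 2)]
        refine Finset.sum_congr rfl fun i _ => ?_
        simp only [hy]
        exact (Finset.prod_pow Finset.univ 2 (fun p => X p (i p) j)).symm
      rw [h1, Finset.prod_congr rfl fun p _ => hnorm p j, Finset.prod_const_one]
    -- orthogonality
    have hy_orth : ∀ a b : Fin k, a ≠ b →
        ∑ i : (∀ p : Fin d, Fin (n p)), y a i * y b i = 0 := by
      intro a b hab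
      have h1 : ∀ i : (∀ p : Fin d, Fin (n p)),
          y a i * y b i = ∏ p, (X p (i p) a * X p (i p) b) := by
        intro i
        simp only [hy]
        exact (Finset.prod_mul_distrib (f := fun p => X p (i p) a) (g := fun p => X p (i p) b)).symm
      calc ∑ i : (∀ p : Fin d, Fin (n p)), y a i * y b i
          = ∑ i : (∀ p : Fin d, Fin (n p)), ∏ p, (X p (i p) a * X p (i p) b) :=
            Finset.sum_congr rfl fun i _ => h1 i
        _ = ∏ p, ∑ l, X p l a * X p l b := (key (fun p l => X p l a * X p l b)).symm
        _ = 0 := horth a b hab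
    -- Bessel: row sums at most 1
    have hbessel : ∀ i : (∀ p : Fin d, Fin (n p)), c i ≤ 1 := by
      intro i0
      set w : Fin k → EuclideanSpace ℝ (∀ p : Fin d, Fin (n p)) := fun j => WithLp.toLp 2 (y j) with hw
      have hwon : Orthonormal ℝ w := by
        rw [orthonormal_iff_ite]
        intro a b
        rw [PiLp.inner_apply]
        simp only [RCLike.inner_apply, conj_trivial]
        by_cases hab : a = b
        · subst hab
          simp only [if_pos rfl]
          simpa [pow_two, hw] using hcol a
        · simp only [hab, if_false]
          simpa [hw, mul_comm] using hy_orth a b hab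
      have hb := hwon.sum_inner_products_le (s := Finset.univ)
        (EuclideanSpace.single i0 (1:ℝ))
      have hnormx : ‖EuclideanSpace.single i0 (1:ℝ)‖ = 1 := by
        simp [EuclideanSpace.norm_single]
      rw [hnormx] at hb
      have hin : ∀ j, (inner ℝ (w j) (EuclideanSpace.single i0 (1:ℝ)) : ℝ) = y j i0 := by
        intro j
        rw [PiLp.inner_apply]
        simp [hw, EuclideanSpace.single_apply, mul_ite, RCLike.inner_apply]
      calc c i0 = ∑ j, ‖(inner ℝ (w j) (EuclideanSpace.single i0 (1:ℝ)) : ℝ)‖ ^ 2 := by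
            refine Finset.sum_congr rfl fun j _ => ?_
            rw [hin j, Real.norm_eq_abs, sq_abs]
        _ ≤ 1 := by simpa using hb
    have hcnonneg : ∀ i, 0 ≤ c i := fun i => Finset.sum_nonneg fun j _ => sq_nonneg _
    -- total mass is k
    have hmass : ∑ i : (∀ p : Fin d, Fin (n p)), c i = k := by
      simp only [hc]
      rw [Finset.sum_comm]
      simp [hcol]
    -- rewrite the value
    have hval : (∑ j : Fin k, ∑ r : Fin R, ∏ p, (∑ l, U p l r * (X p l j) ^ 2))
        = ∑ i : (∀ p : Fin d, Fin (n p)), c i * A i := by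
      have hj : ∀ j : Fin k, ∑ r : Fin R, ∏ p, (∑ l, U p l r * (X p l j) ^ 2)
          = ∑ i : (∀ p : Fin d, Fin (n p)), (y j i) ^ 2 * A i := by
        intro j
        calc ∑ r : Fin R, ∏ p, (∑ l, U p l r * (X p l j) ^ 2)
            = ∑ r : Fin R, ∑ i : (∀ p : Fin d, Fin (n p)),
                ∏ p, (U p (i p) r * (X p (i p) j) ^ 2) :=
              Finset.sum_congr rfl fun r _ => key _
          _ = ∑ r : Fin R, ∑ i : (∀ p : Fin d, Fin (n p)),
                (∏ p, U p (i p) r) * (y j i) ^ 2 := by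
              refine Finset.sum_congr rfl fun r _ => Finset.sum_congr rfl fun i _ => ?_
              rw [Finset.prod_mul_distrib, Finset.prod_pow]
          _ = ∑ i : (∀ p : Fin d, Fin (n p)), (y j i) ^ 2 * A i := by
              rw [Finset.sum_comm]
              refine Finset.sum_congr rfl fun i _ => ?_
              simp only [hA]
              rw [Finset.mul_sum]
              exact Finset.sum_congr rfl fun r _ => mul_comm _ _
      rw [Finset.sum_congr rfl fun j _ => hj j, Finset.sum_comm]
      refine Finset.sum_congr rfl fun i _ => ?_
      simp only [hc]
      rw [Finset.sum_mul]
    rw [hval]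
    -- choose an optimal k-subset T
    obtain ⟨T, hTmem, hTmax⟩ := Finset.exists_max_image
      ((Finset.univ : Finset (∀ p : Fin d, Fin (n p))).powersetCard k)
      (fun T => ∑ i ∈ T, A i)
      (Finset.powersetCard_nonempty.2 (by simpa using hcard))
    have hTcard : T.card = k := Finset.mem_powersetCard_univ.1 hTmem
    have hTne : T.Nonempty := Finset.card_pos.1 (by omega)
    -- m is at least the sum over T
    have hTm : ∑ i ∈ T, A i ≤ m := by
      have eT : Fin k ≃ T := (finCongr hTcard.symm).trans T.equivFin.symm
      have hφ : Function.Injective (fun j : Fin k => (eT j : ∀ p : Fin d, Fin (n p))) :=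
        fun a b hab => eT.injective (Subtype.ext hab)
      have hsum : F (fun j : Fin k => (eT j : ∀ p : Fin d, Fin (n p))) = ∑ i ∈ T, A i := by
        simp only [hF]
        rw [Equiv.sum_comp eT (fun x : T => A (x : ∀ p : Fin d, Fin (n p)))]
        exact Finset.sum_coe_sort T A
      rw [← hsum]
      exact Finset.le_max' _ _ (mem_image.2 ⟨_, mem_filter.2 ⟨mem_univ _, hφ⟩, rfl⟩)
    -- threshold element
    obtain ⟨i₀, hi₀T, hi₀min⟩ := T.exists_min_image A hTne
    have hout : ∀ i, i ∉ T → A i ≤ A i₀ := by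
      intro i hi
      by_contra h
      push_neg at h
      have hnotmem : i ∉ T.erase i₀ := fun hmem => hi (Finset.mem_of_mem_erase hmem)
      have hcard' : (insert i (T.erase i₀)).card = k := by
        rw [Finset.card_insert_of_notMem hnotmem, Finset.card_erase_of_mem hi₀T, hTcard]
        omega
      have hle := hTmax (insert i (T.erase i₀)) (Finset.mem_powersetCard_univ.2 hcard')
      rw [Finset.sum_insert hnotmem, Finset.sum_erase_eq_sub hi₀T] at hle
      linarith
    -- final chain
    have hsplit : ∑ i ∈ (Finset.univ \ T), c i * A i + ∑ i ∈ T, c i * A i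
        = ∑ i : (∀ p : Fin d, Fin (n p)), c i * A i :=
      Finset.sum_sdiff (Finset.subset_univ T)
    have hsplitc : ∑ i ∈ (Finset.univ \ T), c i + ∑ i ∈ T, c i
        = ∑ i : (∀ p : Fin d, Fin (n p)), c i :=
      Finset.sum_sdiff (Finset.subset_univ T)
    have h1 : ∑ i ∈ (Finset.univ \ T), c i * A i ≤ (∑ i ∈ (Finset.univ \ T), c i) * A i₀ := by
      rw [Finset.sum_mul]
      refine Finset.sum_le_sum fun i hi => ?_
      exact mul_le_mul_of_nonneg_left (hout i (Finset.mem_sdiff.1 hi).2) (hcnonneg i)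
    have h2 : ∑ i ∈ T, (1 - c i) * A i₀ ≤ ∑ i ∈ T, (1 - c i) * A i := by
      refine Finset.sum_le_sum fun i hi => ?_
      exact mul_le_mul_of_nonneg_left (hi₀min i hi) (by linarith [hbessel i])
    have h3 : ∑ i ∈ T, (1 - c i) * A i = ∑ i ∈ T, A i - ∑ i ∈ T, c i * A i := by
      rw [← Finset.sum_sub_distrib]
      exact Finset.sum_congr rfl fun i _ => by ring
    have h4 : ∑ i ∈ T, (1 - c i) * A i₀ = ((k : ℝ) - ∑ i ∈ T, c i) * A i₀ := by
      rw [← Finset.sum_mul, Finset.sum_sub_distrib, Finset.sum_const, hTcard]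
      simp
    have h5 : ∑ i ∈ (Finset.univ \ T), c i = (k : ℝ) - ∑ i ∈ T, c i := by
      rw [hmass] at hsplitc; linarith
    calc ∑ i : (∀ p : Fin d, Fin (n p)), c i * A i
        ≤ ∑ i ∈ T, A i := by
          rw [← hsplit]
          rw [h5] at h1
          rw [h4, h3] at h2
          linarith
      _ ≤ m := hTm
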